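/- For each j, let Θ^{(j)} be a finite multiset of points of [0,1] × (0,1] whose second coordinates sum to 1, and let Θ be a countable multiset of points of [0,1] × (0,1] whose second coordinates sum to 1. Assume that for every y ∈ (0,1] such that no point of Θ has second coordinate equal to y: (a) for all j large enough, the number of points (with multiplicity) of Θ^{(j)} with second coordinate ≥ y equals the number of points of Θ with second coordinate ≥ y; and (b) every point of Θ with second coordinate ≥ y is the limit of a sequence of points of Θ^{(j)}. Let (b^{(j)}_k)_{k≥1} and (b_k)_{k≥1} be the decreasing rearrangements (padded with zeros) of the second coordinates of Θ^{(j)} and of Θ, respectively. Then b^{(j)} converges to b componentwise and in ℓ¹: for every k, b^{(j)}_k → b_k, and Σ_{k≥1} |b^{(j)}_k − b_k| → 0 as j → ∞. -/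

import Mathlib

open Filter
open scoped BigOperators

attribute [local instance] Classical.propDecidable

namespace Parking

/-- `descList s k` : the `k`-th term (0-indexed) of the decreasing rearrangement of the
finite multiset `s` of reals, padded with zeros. -/
noncomputable def descList (s : Multiset ℝ) (k : ℕ) : ℝ :=
  ((Multiset.sort s (· ≤ ·)).reverse).getD k 0

section Helpers

open MeasureTheory

lemma list_le_getD_iff {l : List ℝ} (hl : List.Pairwise (fun a b => b ≤ a) l)
    {y : ℝ} (hy : 0 < y) (k : ℕ) :
    y ≤ l.getD k 0 ↔ k < l.countP (fun x => decide (y ≤ x)) := by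
  rcases lt_or_ge k l.length with hk | hk
  · rw [List.getD_eq_get _ _ ⟨k, hk⟩]
    constructor
    · intro h
      have h1 : (l.take (k+1)).countP (fun x => decide (y ≤ x)) = (l.take (k+1)).length := by
        rw [List.countP_eq_length]
        intro a ha
        rw [List.mem_iff_get] at ha
        obtain ⟨⟨i, hi⟩, rfl⟩ := ha
        have hi' : i < k + 1 := lt_of_lt_of_le hi (by simpa using List.length_take_le (k+1) l)
        have hil : i < l.length := lt_of_lt_of_le hi (by simp)
        rw [show (l.take (k+1)).get ⟨i, hi⟩ = l.get ⟨i, hil⟩ by simp]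
        have : l.get ⟨k, hk⟩ ≤ l.get ⟨i, hil⟩ := by
          rcases eq_or_lt_of_le (Nat.lt_succ_iff.mp hi') with h' | h'
          · subst h'; exact le_refl _
          · exact List.pairwise_iff_get.mp hl _ _ h'
        simpa using le_trans h this
      have h2 : (l.take (k+1)).length = k + 1 := by
        rw [List.length_take]; omega
      calc k < k + 1 := Nat.lt_succ_self k
        _ = (l.take (k+1)).countP (fun x => decide (y ≤ x)) := by rw [h1, h2]
        _ ≤ l.countP _ := List.Sublist.countP_le (List.take_sublist _ _)
    · intro h
      by_contra hlt
      push_neg at hlt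
      have hdrop : (l.drop k).countP (fun x => decide (y ≤ x)) = 0 := by
        rw [List.countP_eq_zero]
        intro a ha
        rw [List.mem_iff_get] at ha
        obtain ⟨⟨i, hi⟩, rfl⟩ := ha
        have hki : k + i < l.length := by rw [List.length_drop] at hi; omega
        rw [show (l.drop k).get ⟨i, hi⟩ = l.get ⟨k + i, hki⟩ by simp]
        have : l.get ⟨k + i, hki⟩ ≤ l.get ⟨k, hk⟩ := by
          rcases Nat.eq_or_lt_of_le (Nat.le_add_right k i) with h' | h'
          · simp [Fin.ext_iff, ← h']
          · exact List.pairwise_iff_get.mp hl _ _ h'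
        simp only [decide_eq_true_eq]
        push_neg
        exact lt_of_le_of_lt this hlt
      have := List.countP_append (p := fun x => decide (y ≤ x)) (l₁ := l.take k) (l₂ := l.drop k)
      rw [List.take_append_drop] at this
      rw [this, hdrop, Nat.add_zero] at h
      have := List.countP_le_length (p := fun x => decide (y ≤ x)) (l := l.take k)
      rw [List.length_take] at this
      omega
  · rw [List.getD_eq_default _ _ hk]
    constructor
    · intro h; linarith
    · intro h
      have := List.countP_le_length (p := fun x => decide (y ≤ x)) (l := l)
      omega

lemma descList_sorted_desc (s : Multiset ℝ) :
    List.Pairwise (fun a b => b ≤ a) ((Multiset.sort s (· ≤ ·)).reverse) := by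
  rw [List.pairwise_reverse]
  exact Multiset.pairwise_sort s _

lemma le_descList_iff (s : Multiset ℝ) {y : ℝ} (hy : 0 < y) (k : ℕ) :
    y ≤ descList s k ↔ k < Multiset.card (s.filter (fun x => y ≤ x)) := by
  rw [descList, list_le_getD_iff (descList_sorted_desc s) hy k,
    ← Multiset.countP_eq_card_filter, ← Multiset.coe_countP,
    Multiset.coe_reverse, Multiset.sort_eq]

lemma descList_nonneg {s : Multiset ℝ} (h : ∀ x ∈ s, 0 ≤ x) (k : ℕ) : 0 ≤ descList s k := by
  rcases lt_or_ge k ((Multiset.sort s (· ≤ ·)).reverse).length with hk | hk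
  · rw [descList, List.getD_eq_get _ _ ⟨k, hk⟩]
    apply h
    have hmem : (Multiset.sort s (· ≤ ·)).reverse.get ⟨k, hk⟩
        ∈ (Multiset.sort s (· ≤ ·)).reverse := List.get_mem _ _
    rwa [List.mem_reverse, Multiset.mem_sort] at hmem
  · rw [descList, List.getD_eq_default _ _ hk]

lemma descList_eq_zero {s : Multiset ℝ} {k : ℕ} (hk : Multiset.card s ≤ k) : descList s k = 0 := by
  rw [descList, List.getD_eq_default]
  rw [List.length_reverse, Multiset.length_sort]
  exact hk

lemma sum_range_getD (l : List ℝ) : ∑ i ∈ Finset.range l.length, l.getD i 0 = l.sum := by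
  induction l with
  | nil => simp
  | cons a t ih =>
    rw [List.length_cons, Finset.sum_range_succ']
    simp only [List.getD_cons_succ, List.getD_cons_zero, List.sum_cons]
    rw [ih]; ring

lemma tsum_descList (s : Multiset ℝ) : ∑' k, descList s k = s.sum := by
  rw [tsum_eq_sum (s := Finset.range (Multiset.card s))
    (fun k hk => descList_eq_zero (by simpa using hk))]
  have h1 : ∀ k ∈ Finset.range (Multiset.card s),
      descList s k = ((Multiset.sort s (· ≤ ·)).reverse).getD k 0 := fun k _ => rfl
  rw [Finset.sum_congr rfl h1]
  have hlen : Multiset.card s = ((Multiset.sort s (· ≤ ·)).reverse).length := by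
    rw [List.length_reverse, Multiset.length_sort]
  rw [hlen, sum_range_getD]
  rw [← Multiset.sum_coe, Multiset.coe_reverse, Multiset.sort_eq]

lemma antitone_char {b : ℕ → ℝ} (hbmono : Antitone b) {y : ℝ} (k : ℕ)
    (hfin : {k' | y ≤ b k'}.Finite) :
    y ≤ b k ↔ k < {k' | y ≤ b k'}.ncard := by
  constructor
  · intro h
    have hsub : (↑(Finset.Iic k) : Set ℕ) ⊆ {k' | y ≤ b k'} := by
      intro x hx
      simp only [Finset.coe_Iic, Set.mem_Iic] at hx
      exact le_trans h (hbmono hx)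
    have := Set.ncard_le_ncard hsub hfin
    rwa [Set.ncard_coe_finset, Nat.card_Iic] at this
  · intro h
    by_contra hlt
    push_neg at hlt
    have hsub : {k' | y ≤ b k'} ⊆ (↑(Finset.range k) : Set ℕ) := by
      intro x hx
      simp only [Finset.coe_range, Set.mem_Iio]
      by_contra hxk
      push_neg at hxk
      exact absurd (le_trans hx (hbmono hxk)) (not_le.mpr hlt)
    have := Set.ncard_le_ncard hsub (Finset.range k).finite_toSet
    rw [Set.ncard_coe_finset, Finset.card_range] at this
    omega

lemma exists_nonatom {S : Set ℝ} (hS : S.Countable) {a c : ℝ} (h : a < c) :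
    ∃ y ∈ Set.Ioo a c, y ∉ S := by
  have h0 : volume (Set.Ioo a c \ S) ≠ 0 := by
    rw [measure_diff_null (hS.measure_zero volume), Real.volume_Ioo]
    simp only [ne_eq, ENNReal.ofReal_eq_zero, not_le]
    linarith
  obtain ⟨y, hy⟩ := nonempty_of_measure_ne_zero h0
  exact ⟨y, hy.1, hy.2⟩

lemma finite_ge_of_summable {ι : Type*} {f : ι → ℝ} (hf : Summable f) {y : ℝ} (hy : 0 < y) :
    {i | y ≤ f i}.Finite := by
  have h := hf.tendsto_cofinite_zero
  have h2 : ∀ᶠ i in Filter.cofinite, f i < y := h.eventually (eventually_lt_nhds hy)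
  rw [Filter.eventually_cofinite] at h2
  exact h2.subset (fun i hi => by simpa using hi)

lemma count_gt_eq_iSup {γ : Type*} [MeasurableSpace γ] (g : γ → ℝ) {t : ℝ} (ht : 0 < t) :
    Measure.count {x | t < g x} = ⨆ n : ℕ, Measure.count {x | t + 1/(n+1) ≤ g x} := by
  have hset : {x | t < g x} = ⋃ n : ℕ, {x | t + 1/(n+1) ≤ g x} := by
    ext x
    simp only [Set.mem_setOf_eq, Set.mem_iUnion]
    constructor
    · intro h
      obtain ⟨n, hn⟩ := exists_nat_one_div_lt (sub_pos.mpr h)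
      exact ⟨n, by linarith⟩
    · rintro ⟨n, hn⟩
      have : (0:ℝ) < 1/(n+1) := by positivity
      linarith
  rw [hset]
  apply Directed.measure_iUnion
  apply Monotone.directed_le
  intro n m hnm x hx
  simp only [Set.mem_setOf_eq] at *
  have : (1:ℝ)/(m+1) ≤ 1/(n+1) := by
    apply one_div_le_one_div_of_le (by positivity)
    have := (Nat.cast_le (α := ℝ)).mpr hnm
    linarith
  linarith

lemma tsum_eq_of_count_eq {ι : Type*} [Countable ι] {f : ι → ℝ} {b : ℕ → ℝ}
    (hf0 : ∀ i, 0 ≤ f i) (hb0 : ∀ k, 0 ≤ b k)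
    (hfin_f : ∀ y : ℝ, 0 < y → {i | y ≤ f i}.Finite)
    (hfin_b : ∀ y : ℝ, 0 < y → {k | y ≤ b k}.Finite)
    (hcard : ∀ y : ℝ, 0 < y → {k | y ≤ b k}.ncard = {i | y ≤ f i}.ncard) :
    ∑' k, ENNReal.ofReal (b k) = ∑' i, ENNReal.ofReal (f i) := by
  letI : MeasurableSpace ι := ⊤
  haveI : MeasurableSingletonClass ι := ⟨fun _ => trivial⟩
  rw [← lintegral_count (fun k => ENNReal.ofReal (b k)),
    ← lintegral_count (fun i => ENNReal.ofReal (f i)),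
    lintegral_eq_lintegral_meas_lt Measure.count
      (Eventually.of_forall hb0) measurable_from_top.aemeasurable,
    lintegral_eq_lintegral_meas_lt Measure.count
      (Eventually.of_forall hf0) measurable_from_top.aemeasurable]
  apply setLIntegral_congr_fun measurableSet_Ioi
  intro t ht
  simp only [Set.mem_Ioi] at ht
  beta_reduce
  rw [count_gt_eq_iSup b ht, count_gt_eq_iSup f ht]
  congr 1
  ext n
  have hy : (0:ℝ) < t + 1/(n+1) := by positivity
  rw [Measure.count_apply_finite _ (hfin_b _ hy), Measure.count_apply_finite _ (hfin_f _ hy)]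
  congr 1
  rw [← Set.ncard_eq_toFinset_card _ (hfin_b _ hy), ← Set.ncard_eq_toFinset_card _ (hfin_f _ hy)]
  exact hcard _ hy

lemma summable_tsum_of_count_eq {ι : Type*} [Countable ι] {f : ι → ℝ} {b : ℕ → ℝ}
    (hf0 : ∀ i, 0 ≤ f i) (hb0 : ∀ k, 0 ≤ b k)
    (hfsum : Summable f) (hf1 : ∑' i, f i = 1)
    (hfin_b : ∀ y : ℝ, 0 < y → {k | y ≤ b k}.Finite)
    (hcard : ∀ y : ℝ, 0 < y → {k | y ≤ b k}.ncard = {i | y ≤ f i}.ncard) :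
    Summable b ∧ ∑' k, b k = 1 := by
  have hfin_f : ∀ y : ℝ, 0 < y → {i | y ≤ f i}.Finite :=
    fun y hy => finite_ge_of_summable hfsum hy
  have key : ∑' k, ENNReal.ofReal (b k) = ∑' i, ENNReal.ofReal (f i) :=
    tsum_eq_of_count_eq hf0 hb0 hfin_f hfin_b hcard
  have hrhs : ∑' i, ENNReal.ofReal (f i) = 1 := by
    rw [← ENNReal.ofReal_tsum_of_nonneg hf0 hfsum, hf1, ENNReal.ofReal_one]
  rw [hrhs] at key
  have hb_summable : Summable b := by
    have h1 : ∑' k, ((b k).toNNReal : ENNReal) ≠ ⊤ := by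
      have : ∀ k, ((b k).toNNReal : ENNReal) = ENNReal.ofReal (b k) := fun k => rfl
      rw [tsum_congr this, key]
      exact ENNReal.one_ne_top
    have h2 := ENNReal.tsum_coe_ne_top_iff_summable.mp h1
    have h3 : ∀ k, ((b k).toNNReal : ℝ) = b k := fun k => Real.coe_toNNReal _ (hb0 k)
    have h4 := NNReal.summable_coe.mpr h2
    exact h4.congr h3
  refine ⟨hb_summable, ?_⟩
  have := ENNReal.ofReal_tsum_of_nonneg hb0 hb_summable
  rw [key, ← ENNReal.ofReal_one] at this
  exact (ENNReal.ofReal_eq_ofReal_iff (tsum_nonneg hb0) zero_le_one).mp this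

end Helpers

/-- If finite point processes `Θ_j` on `[0,1] × (0,1]` whose second coordinates sum to `1`
converge vaguely to a point process `Θ` (indexed by a countable family `θ : ι → ℝ × ℝ`)
whose second coordinates sum to `1`, then the decreasing rearrangements of the second
coordinates converge componentwise and in `ℓ¹`. -/
theorem ranked_lengths_converge {ι : Type*} [Countable ι]
    (Θs : ℕ → Multiset (ℝ × ℝ))
    (hΘs1 : ∀ j, ∀ q ∈ Θs j, q.1 ∈ Set.Icc (0 : ℝ) 1 ∧ q.2 ∈ Set.Ioc (0 : ℝ) 1)
    (hΘs2 : ∀ j, ((Θs j).map Prod.snd).sum = 1)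
    (θ : ι → ℝ × ℝ)
    (hθ1 : ∀ i, (θ i).1 ∈ Set.Icc (0 : ℝ) 1 ∧ (θ i).2 ∈ Set.Ioc (0 : ℝ) 1)
    (hθsum : Summable (fun i => (θ i).2)) (hθ2 : ∑' i, (θ i).2 = 1)
    (hvague : ∀ y : ℝ, 0 < y → (¬ ∃ i, (θ i).2 = y) →
      ({i | y ≤ (θ i).2}.Finite
        ∧ (∀ᶠ j in Filter.atTop,
            (((Θs j).filter (fun q => y ≤ q.2)).card : ℕ) = {i | y ≤ (θ i).2}.ncard)
        ∧ ∀ i, y ≤ (θ i).2 → ∃ q : ℕ → ℝ × ℝ,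
            (∀ᶠ j in Filter.atTop, q j ∈ Θs j)
              ∧ Filter.Tendsto q Filter.atTop (nhds (θ i))))
    (b : ℕ → ℝ) (hbmono : Antitone b) (hbnn : ∀ k, 0 ≤ b k)
    (hbcount : ∀ y : ℝ, 0 < y →
      {k | y ≤ b k}.Finite ∧ {k | y ≤ b k}.ncard = {i | y ≤ (θ i).2}.ncard) :
    (∀ k, Filter.Tendsto (fun j => descList ((Θs j).map Prod.snd) k)
        Filter.atTop (nhds (b k)))
      ∧ Filter.Tendsto (fun j => ∑' k : ℕ, |descList ((Θs j).map Prod.snd) k - b k|)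
          Filter.atTop (nhds 0) := by
  set S : ℕ → Multiset ℝ := fun j => (Θs j).map Prod.snd with hS
  have hSpos : ∀ j, ∀ x ∈ S j, 0 < x := by
    intro j x hx
    simp only [hS, Multiset.mem_map] at hx
    obtain ⟨q, hq, rfl⟩ := hx
    exact ((hΘs1 j q hq).2).1
  have hSnn : ∀ j, ∀ x ∈ S j, 0 ≤ x := fun j x hx => le_of_lt (hSpos j x hx)
  have hcardS : ∀ (j : ℕ) (y : ℝ),
      Multiset.card ((S j).filter (fun x => y ≤ x))
        = Multiset.card ((Θs j).filter (fun q => y ≤ q.2)) := by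
    intro j y
    rw [← Multiset.countP_eq_card_filter, hS, Multiset.countP_map,
      ← Multiset.countP_eq_card_filter]
  have hcomp : ∀ k, Tendsto (fun j => descList (S j) k) atTop (nhds (b k)) := by
    intro k
    rw [Metric.tendsto_nhds]
    intro ε hε
    have h1 : b k < b k + ε := by linarith
    obtain ⟨y₁, hy₁mem, hy₁na⟩ := exists_nonatom (Set.countable_range fun i => (θ i).2) h1
    have hy₁pos : 0 < y₁ := lt_of_le_of_lt (hbnn k) hy₁mem.1
    have hna₁ : ¬∃ i, (θ i).2 = y₁ := fun ⟨i, hi⟩ => hy₁na ⟨i, hi⟩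
    obtain ⟨-, hev₁, -⟩ := hvague y₁ hy₁pos hna₁
    have hcard₁ : {i | y₁ ≤ (θ i).2}.ncard ≤ k := by
      rw [← (hbcount y₁ hy₁pos).2]
      by_contra h
      push_neg at h
      have := (antitone_char hbmono k (hbcount y₁ hy₁pos).1).mpr h
      linarith [hy₁mem.1]
    have hupper : ∀ᶠ j in atTop, descList (S j) k < y₁ := by
      filter_upwards [hev₁] with j hj
      by_contra hge
      push_neg at hge
      rw [le_descList_iff (S j) hy₁pos k, hcardS j y₁, hj] at hge
      omega
    have hlower : ∀ᶠ j in atTop, b k - ε < descList (S j) k := by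
      rcases lt_or_ge 0 (b k) with hbk | hbk
      · have hε' : 0 < min ε (b k) := lt_min hε hbk
        have h2 : b k - min ε (b k) < b k := by linarith
        obtain ⟨y₂, hy₂mem, hy₂na⟩ :=
          exists_nonatom (Set.countable_range fun i => (θ i).2) h2
        have hy₂pos : 0 < y₂ := by
          have := min_le_right ε (b k)
          have := hy₂mem.1
          linarith
        have hna₂ : ¬∃ i, (θ i).2 = y₂ := fun ⟨i, hi⟩ => hy₂na ⟨i, hi⟩
        obtain ⟨-, hev₂, -⟩ := hvague y₂ hy₂pos hna₂
        have hcard₂ : k < {i | y₂ ≤ (θ i).2}.ncard := by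
          rw [← (hbcount y₂ hy₂pos).2]
          exact (antitone_char hbmono k (hbcount y₂ hy₂pos).1).mp (le_of_lt hy₂mem.2)
        filter_upwards [hev₂] with j hj
        have hle : y₂ ≤ descList (S j) k := by
          rw [le_descList_iff (S j) hy₂pos k, hcardS j y₂, hj]
          exact hcard₂
        have hmin : min ε (b k) ≤ ε := min_le_left _ _
        have := hy₂mem.1
        linarith
      · apply Eventually.of_forall
        intro j
        have := descList_nonneg (hSnn j) k
        have hbk0 : b k = 0 := le_antisymm hbk (hbnn k)
        linarith
    filter_upwards [hupper, hlower] with j hu hl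
    rw [Real.dist_eq, abs_sub_lt_iff]
    constructor
    · linarith [hy₁mem.2]
    · linarith
  have hbs := summable_tsum_of_count_eq (fun i => le_of_lt (hθ1 i).2.1) hbnn hθsum hθ2
      (fun y hy => (hbcount y hy).1) (fun y hy => (hbcount y hy).2)
  have hSsum : ∀ j, ∑' k, descList (S j) k = 1 := fun j => by
    rw [tsum_descList]; exact hΘs2 j
  have hSsummable : ∀ j, Summable (fun k => descList (S j) k) := by
    intro j
    apply summable_of_ne_finset_zero (s := Finset.range (Multiset.card (S j)))
    intro k hk
    exact descList_eq_zero (by simpa using hk)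
  refine ⟨hcomp, ?_⟩
  have hm_nonneg : ∀ j k, 0 ≤ min (descList (S j) k) (b k) :=
    fun j k => le_min (descList_nonneg (hSnn j) k) (hbnn k)
  have hm_summable : ∀ j, Summable (fun k => min (descList (S j) k) (b k)) := fun j =>
    Summable.of_nonneg_of_le (hm_nonneg j) (fun k => min_le_right _ _) hbs.1
  have htm : Tendsto (fun j => ∑' k, min (descList (S j) k) (b k)) atTop (nhds 1) := by
    have h := tendsto_tsum_of_dominated_convergence
      (f := fun j k => min (descList (S j) k) (b k)) (g := b) (bound := b) hbs.1
      (fun k => by simpa [min_self] using (hcomp k).min (tendsto_const_nhds (x := b k)))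
      (Eventually.of_forall fun j => fun k => by
        rw [Real.norm_eq_abs, abs_of_nonneg (hm_nonneg j k)]
        exact min_le_right _ _)
    rwa [hbs.2] at h
  have hident : ∀ j, ∑' k, |descList (S j) k - b k|
      = 2 - 2 * ∑' k, min (descList (S j) k) (b k) := by
    intro j
    have h1 : ∀ k, |descList (S j) k - b k|
        = (descList (S j) k + b k) - 2 * min (descList (S j) k) (b k) := by
      intro k
      rcases le_total (descList (S j) k) (b k) with h | h
      · rw [min_eq_left h, abs_of_nonpos (by linarith)]; ring
      · rw [min_eq_right h, abs_of_nonneg (by linarith)]; ring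
    rw [tsum_congr h1, Summable.tsum_sub ((hSsummable j).add hbs.1) ((hm_summable j).mul_left 2),
      Summable.tsum_add (hSsummable j) hbs.1, hSsum j, hbs.2, tsum_mul_left]
    ring
  have heq : (fun j => ∑' k, |descList (S j) k - b k|)
      = fun j => 2 - 2 * ∑' k, min (descList (S j) k) (b k) := funext hident
  rw [heq]
  have hfin := (tendsto_const_nhds (x := (2:ℝ)) (f := atTop)).sub (htm.const_mul 2)
  simpa using hfin


end Parking
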